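/- Let K be a field of characteristic zero, q ∈ ℚ ∖ {0,1,−1}, A = [[1,0,0],[1,q,0],[1,0,q⁻¹]] ∈ GL(3,K), Σ = {Aᵏ : k ∈ ℤ}, and let Λ₂ ⊆ GL(3,K) denote the group of upper unitriangular 3×3 matrices with integer entries. Let β : GL(3,K) → GL(3,K) be the automorphism β(g) = (gᵀ)⁻¹ (inverse transpose). Then there exists no B ∈ GL(3,K) satisfying both B⁻¹β(Σ)B = Σ and B⁻¹β(Λ₂)B = Λ₂. -/

import Mathlib

open Matrix

/-- The upper unitriangular matrix `[[1,a,b],[0,1,c],[0,0,1]]` with integer entries,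
regarded as a matrix over a field `K` of characteristic zero. -/
def unitriMat (K : Type) [Field K] (a b c : ℤ) : Matrix (Fin 3) (Fin 3) K :=
  !![1, (a : K), (b : K); 0, 1, (c : K); 0, 0, 1]

/-- The matrix `A = [[1,0,0],[1,q,0],[1,0,q⁻¹]]` over `K`. -/
def Amat (K : Type) [Field K] (q : ℚ) : Matrix (Fin 3) (Fin 3) K :=
  !![1, 0, 0; 1, (q : K), 0; 1, 0, (q : K)⁻¹]

/-- Let `β(g) = (gᵀ)⁻¹` be the inverse-transpose automorphism.
There is no `B ∈ GL(3,K)` with `B⁻¹ β(Σ) B = Σ` and `B⁻¹ β(Λ₂) B = Λ₂`, where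
`Σ = {Aᵏ : k ∈ ℤ}` and `Λ₂` is the group of integer upper unitriangular matrices. -/
theorem no_conjugation_between_beta_and_identity (K : Type) [Field K] [CharZero K]
    (q : ℚ) (hq0 : q ≠ 0) (hq1 : q ≠ 1) (hqm1 : q ≠ -1) :
    ¬ ∃ B : Matrix (Fin 3) (Fin 3) K, IsUnit B.det ∧
      (∀ m : Matrix (Fin 3) (Fin 3) K,
        (∃ k : ℤ, B * m * B⁻¹ = ((Amat K q ^ k)ᵀ)⁻¹) ↔ ∃ k : ℤ, m = Amat K q ^ k) ∧
      (∀ m : Matrix (Fin 3) (Fin 3) K,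
        (∃ a b c : ℤ, B * m * B⁻¹ = ((unitriMat K a b c)ᵀ)⁻¹) ↔
          ∃ a b c : ℤ, m = unitriMat K a b c) := by
  rintro ⟨B, hdet, hS, hL⟩
  set A := Amat K q with hA
  have hq0K : (q : K) ≠ 0 := by exact_mod_cast hq0
  have hq1K : (q : K) ≠ 1 := by exact_mod_cast hq1
  have hqm1K : (q : K) ≠ -1 := by
    intro h; apply hqm1; exact_mod_cast h
  have hdetA : IsUnit A.det := by
    have h : A.det = 1 := by
      simp [hA, Amat, Matrix.det_fin_three, mul_inv_cancel₀ hq0K]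
    rw [h]; exact isUnit_one
  have hAinv : A⁻¹ = !![(1:K), 0, 0; -(q:K)⁻¹, (q:K)⁻¹, 0; -(q:K), 0, (q:K)] := by
    apply inv_eq_right_inv
    ext i j
    fin_cases i <;> fin_cases j <;>
      simp [hA, Amat, Matrix.mul_apply, Fin.sum_univ_three, Matrix.one_apply,
        mul_inv_cancel₀ hq0K, inv_mul_cancel₀ hq0K]
  have hA01 : A 0 1 = 0 := by simp [hA, Amat, Matrix.vecHead, Matrix.vecTail]
  have hA21 : A 2 1 = 0 := by simp [hA, Amat, Matrix.vecHead, Matrix.vecTail]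
  have hAi01 : A⁻¹ 0 1 = 0 := by rw [hAinv]; simp
  have hAi21 : A⁻¹ 2 1 = 0 := by rw [hAinv]; simp
  have hcol : ∀ n : ℤ, (A ^ n) 0 1 = 0 ∧ (A ^ n) 2 1 = 0 := by
    intro n
    induction n using Int.induction_on with
    | zero => simp [Matrix.one_apply]
    | succ i ih =>
        rw [Matrix.zpow_add_one hdetA]
        constructor <;>
        · rw [Matrix.mul_apply, Fin.sum_univ_three, hA01, hA21]
          simp [ih.1, ih.2]
    | pred i ih =>
        rw [Matrix.zpow_sub_one hdetA]
        constructor <;>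
        · rw [Matrix.mul_apply, Fin.sum_univ_three, hAi01, hAi21]
          simp [ih.1, ih.2]
  have hBBi : B * B⁻¹ = 1 := mul_nonsing_inv B hdet
  have hBiB : B⁻¹ * B = 1 := nonsing_inv_mul B hdet
  -- Sigma condition applied to A itself
  obtain ⟨k, hk⟩ := (hS A).mpr ⟨1, (zpow_one A).symm⟩
  have hM : ((A ^ k)ᵀ)⁻¹ = (A ^ (-k))ᵀ := by
    rw [← Matrix.transpose_nonsing_inv, Matrix.zpow_neg hdetA]
  have hBA : B * A = (A ^ (-k))ᵀ * B := by
    calc B * A = B * A * B⁻¹ * B := by rw [mul_assoc, hBiB, mul_one]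
    _ = ((A ^ k)ᵀ)⁻¹ * B := by rw [hk]
    _ = (A ^ (-k))ᵀ * B := by rw [hM]
  -- Lambda condition applied to the conjugate of I + E₃₂
  have hT : (unitriMat K 0 0 (-1))ᵀ = !![(1:K), 0, 0; 0, 1, 0; 0, -1, 1] := by
    ext i j
    fin_cases i <;> fin_cases j <;> simp [unitriMat, Matrix.transpose_apply, Matrix.vecHead, Matrix.vecTail]
  have hL' : ((unitriMat K 0 0 (-1))ᵀ)⁻¹ = !![(1:K), 0, 0; 0, 1, 0; 0, 1, 1] := by
    rw [hT]
    apply inv_eq_right_inv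
    ext i j
    fin_cases i <;> fin_cases j <;>
      simp [Matrix.mul_apply, Fin.sum_univ_three, Matrix.one_apply, Matrix.vecHead, Matrix.vecTail]
  set L : Matrix (Fin 3) (Fin 3) K := !![(1:K), 0, 0; 0, 1, 0; 0, 1, 1] with hLdef
  have hconj : B * (B⁻¹ * (L * B)) * B⁻¹ = L := by
    simp only [← mul_assoc]
    rw [hBBi, one_mul, mul_assoc, hBBi, mul_one]
  obtain ⟨a, b, c, hm⟩ := (hL (B⁻¹ * (L * B))).mp ⟨0, 0, -1, by rw [hconj, hL']⟩
  have hLB : L * B = B * unitriMat K a b c := by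
    have h := congrArg (fun X => B * X) hm
    simp only [← mul_assoc, hBBi, one_mul] at h
    exact h
  have h10 : B 1 0 = 0 := by
    have h := congrFun (congrFun hLB 2) 0
    simp [hLdef, unitriMat, Matrix.mul_apply, Fin.sum_univ_three, Matrix.vecHead,
      Matrix.vecTail] at h
    linear_combination h
  obtain ⟨h01, h21⟩ := hcol (-k)
  have hA00 : A 0 0 = 1 := by simp [hA, Amat, Matrix.vecHead, Matrix.vecTail]
  have hA10 : A 1 0 = 1 := by simp [hA, Amat, Matrix.vecHead, Matrix.vecTail]
  have hA20 : A 2 0 = 1 := by simp [hA, Amat, Matrix.vecHead, Matrix.vecTail]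
  have hA11 : A 1 1 = (q : K) := by simp [hA, Amat, Matrix.vecHead, Matrix.vecTail]
  have hA02 : A 0 2 = 0 := by simp [hA, Amat, Matrix.vecHead, Matrix.vecTail]
  have hA12 : A 1 2 = 0 := by simp [hA, Amat, Matrix.vecHead, Matrix.vecTail]
  have hA22 : A 2 2 = (q : K)⁻¹ := by simp [hA, Amat, Matrix.vecHead, Matrix.vecTail]
  have e0 := congrFun (congrFun hBA 1) 0
  have e1 := congrFun (congrFun hBA 1) 1
  have e2 := congrFun (congrFun hBA 1) 2
  simp only [Matrix.mul_apply, Fin.sum_univ_three, Matrix.transpose_apply] at e0 e1 e2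
  rw [h01, h21, hA00, hA10, hA20] at e0
  rw [h01, h21, hA01, hA21, hA11] at e1
  rw [h01, h21, hA02, hA12, hA22] at e2
  set t := (A ^ (-k)) 1 1 with htdef
  -- clean forms
  have f0 : B 1 1 + B 1 2 = 0 := by
    rw [h10] at e0; linear_combination e0
  have f1 : (q : K) * B 1 1 = t * B 1 1 := by linear_combination e1
  have f2 : (q : K)⁻¹ * B 1 2 = t * B 1 2 := by linear_combination e2
  have hB11 : B 1 1 = 0 := by
    by_contra hne
    have ht : (q : K) = t := mul_right_cancel₀ hne f1
    have hB12 : B 1 2 = -B 1 1 := by linear_combination f0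
    have hB12ne : B 1 2 ≠ 0 := by rw [hB12]; exact neg_ne_zero.mpr hne
    have ht' : (q : K)⁻¹ = t := mul_right_cancel₀ hB12ne f2
    have hqq : (q : K)⁻¹ = (q : K) := by rw [ht', ← ht]
    have hq2 : (q : K) * (q : K) = 1 := by
      calc (q : K) * (q : K) = (q : K) * (q : K)⁻¹ := by rw [hqq]
      _ = 1 := mul_inv_cancel₀ hq0K
    rcases mul_self_eq_one_iff.mp hq2 with h | h
    · exact hq1K h
    · exact hqm1K h
  have hB12 : B 1 2 = 0 := by linear_combination f0 - hB11
  have hrow : ∀ j, B 1 j = 0 := by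
    intro j; fin_cases j
    · exact h10
    · exact hB11
    · exact hB12
  have : B.det = 0 := Matrix.det_eq_zero_of_row_eq_zero 1 hrow
  exact hdet.ne_zero this
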